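/- Let χ : [n] → {0,1} be equitable (n even). The stabilizer subgroup H_χ = {g ∈ Sym(n) : χ(g·v) = χ(v) for all v}, equipped with the uniform measure and the normalized Hamming metric d(σ₁,σ₂) = (1/n)·#{i : σ₁(i) ≠ σ₂(i)}, is (4, n/16)-concentrated. -/

import Mathlib

open Finset Real

namespace Stmt17

variable {n : ℕ} {χ : Fin n → Fin 2}

lemma perm_apply_inv_self {α : Type*} (f : Equiv.Perm α) (x : α) : f (f⁻¹ x) = x := by simp

lemma perm_inv_apply_self {α : Type*} (f : Equiv.Perm α) (x : α) : f⁻¹ (f x) = x := by simp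

/-- The stabilizer of `χ` as a finset. -/
def Hs (χ : Fin n → Fin 2) : Finset (Equiv.Perm (Fin n)) :=
  Finset.univ.filter fun g => ∀ v, χ (g v) = χ v

/-- Unnormalized Hamming distance. -/
def D (g₁ g₂ : Equiv.Perm (Fin n)) : ℕ :=
  (Finset.univ.filter fun i => g₁ i ≠ g₂ i).card

/-- The "coset" of elements of `Hs χ` agreeing with `p` on points `< k`. -/
def coset (χ : Fin n → Fin 2) (k : ℕ) (p : Equiv.Perm (Fin n)) : Finset (Equiv.Perm (Fin n)) :=
  (Hs χ).filter fun g => ∀ i : Fin n, (i : ℕ) < k → g i = p i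

lemma mem_Hs {g : Equiv.Perm (Fin n)} : g ∈ Hs χ ↔ ∀ v, χ (g v) = χ v := by
  simp [Hs]

lemma one_mem_Hs : (1 : Equiv.Perm (Fin n)) ∈ Hs χ := by simp [Hs]

lemma Hs_inv_apply {g : Equiv.Perm (Fin n)} (hg : g ∈ Hs χ) (v : Fin n) :
    χ (g⁻¹ v) = χ v := by
  have := mem_Hs.mp hg (g⁻¹ v)
  rw [perm_apply_inv_self] at this; exact this.symm

lemma mem_coset {k : ℕ} {p g : Equiv.Perm (Fin n)} :
    g ∈ coset χ k p ↔ g ∈ Hs χ ∧ ∀ i : Fin n, (i : ℕ) < k → g i = p i := by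
  simp [coset]

lemma coset_zero (p : Equiv.Perm (Fin n)) : coset χ 0 p = Hs χ := by
  ext g; simp [coset]

lemma self_mem_coset {k : ℕ} {p : Equiv.Perm (Fin n)} (hp : p ∈ Hs χ) :
    p ∈ coset χ k p := mem_coset.mpr ⟨hp, fun _ _ => rfl⟩

lemma coset_of_le {k : ℕ} (hk : n ≤ k) {p : Equiv.Perm (Fin n)} (hp : p ∈ Hs χ) :
    coset χ k p = {p} := by
  ext g
  simp only [mem_coset, Finset.mem_singleton]
  constructor
  · rintro ⟨-, h⟩
    exact Equiv.ext fun i => h i (lt_of_lt_of_le i.isLt hk)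
  · rintro rfl
    exact ⟨hp, fun _ _ => rfl⟩

lemma D_mul_swap_le (x : Equiv.Perm (Fin n)) (u v : Fin n) :
    D x (x * Equiv.swap u v) ≤ 2 := by
  have hsub : (Finset.univ.filter fun i => x i ≠ (x * Equiv.swap u v) i) ⊆ {u, v} := by
    intro i hi
    simp only [Finset.mem_filter, Equiv.Perm.mul_apply, ne_eq] at hi
    simp only [Finset.mem_insert, Finset.mem_singleton]
    by_contra hc
    push_neg at hc
    exact (Finset.mem_filter.mp (hi : i ∈ Finset.univ.filter fun i => x i ≠ (x * Equiv.swap u v) i)).2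
      (by rw [Equiv.swap_apply_of_ne_of_ne hc.1 hc.2])
  calc D x (x * Equiv.swap u v) ≤ ({u, v} : Finset (Fin n)).card := Finset.card_le_card hsub
    _ ≤ 2 := Finset.card_insert_le u {v} |>.trans (by simp)

lemma D_le_n (g₁ g₂ : Equiv.Perm (Fin n)) : D g₁ g₂ ≤ n := by
  calc D g₁ g₂ ≤ (Finset.univ : Finset (Fin n)).card := Finset.card_filter_le _ _
    _ = n := by simp


/-- Discrete Hoeffding step: mean-zero values bounded by 2 have small exponential sums. -/
lemma sum_exp_le_of_mean_zero {β : Type*} (S : Finset β) (μ : β → ℝ)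
    (hμ : ∀ b ∈ S, |μ b| ≤ 2) (h0 : ∑ b ∈ S, μ b = 0) (l : ℝ) :
    ∑ b ∈ S, Real.exp (l * μ b) ≤ (S.card : ℝ) * Real.exp (2 * l ^ 2) := by
  have key : ∀ b ∈ S, Real.exp (l * μ b) ≤
      (Real.exp (2 * l) + Real.exp (-(2 * l))) / 2
        + μ b * ((Real.exp (2 * l) - Real.exp (-(2 * l))) / 4) := by
    intro b hb
    have hb2 := abs_le.mp (hμ b hb)
    have ha : (0 : ℝ) ≤ (2 + μ b) / 4 := by linarith [hb2.1]
    have hbn : (0 : ℝ) ≤ (2 - μ b) / 4 := by linarith [hb2.2]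
    have hab : (2 + μ b) / 4 + (2 - μ b) / 4 = 1 := by ring
    have := convexOn_exp.2 (Set.mem_univ (2 * l)) (Set.mem_univ (-(2 * l))) ha hbn hab
    simp only [smul_eq_mul] at this
    have harg : (2 + μ b) / 4 * (2 * l) + (2 - μ b) / 4 * (-(2 * l)) = l * μ b := by ring
    rw [harg] at this
    calc Real.exp (l * μ b)
        ≤ (2 + μ b) / 4 * Real.exp (2 * l) + (2 - μ b) / 4 * Real.exp (-(2 * l)) := this
      _ = (Real.exp (2 * l) + Real.exp (-(2 * l))) / 2
            + μ b * ((Real.exp (2 * l) - Real.exp (-(2 * l))) / 4) := by ring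
  calc ∑ b ∈ S, Real.exp (l * μ b)
      ≤ ∑ b ∈ S, ((Real.exp (2 * l) + Real.exp (-(2 * l))) / 2
          + μ b * ((Real.exp (2 * l) - Real.exp (-(2 * l))) / 4)) := Finset.sum_le_sum key
    _ = (S.card : ℝ) * ((Real.exp (2 * l) + Real.exp (-(2 * l))) / 2)
          + (∑ b ∈ S, μ b) * ((Real.exp (2 * l) - Real.exp (-(2 * l))) / 4) := by
        rw [Finset.sum_add_distrib, Finset.sum_const, ← Finset.sum_mul]
        simp [nsmul_eq_mul]
    _ = (S.card : ℝ) * Real.cosh (2 * l) := by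
        rw [h0, Real.cosh_eq]; ring
    _ ≤ (S.card : ℝ) * Real.exp (2 * l ^ 2) := by
        have := Real.cosh_le_exp_half_sq (2 * l)
        have h2 : (2 * l) ^ 2 / 2 = 2 * l ^ 2 := by ring
        rw [h2] at this
        exact mul_le_mul_of_nonneg_left this (Nat.cast_nonneg _)


lemma phi_spec {k : ℕ} (hk : k < n) {p x z : Equiv.Perm (Fin n)}
    (hx : x ∈ coset χ k p) (hz : z ∈ coset χ k p) :
    x * Equiv.swap ⟨k, hk⟩ (x⁻¹ (z ⟨k, hk⟩)) ∈ coset χ k p ∧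
      (x * Equiv.swap ⟨k, hk⟩ (x⁻¹ (z ⟨k, hk⟩))) ⟨k, hk⟩ = z ⟨k, hk⟩ := by
  obtain ⟨hxH, hxp⟩ := mem_coset.mp hx
  obtain ⟨hzH, hzp⟩ := mem_coset.mp hz
  set κ : Fin n := ⟨k, hk⟩ with hκ
  have hyκ : (x * Equiv.swap κ (x⁻¹ (z κ))) κ = z κ := by
    rw [Equiv.Perm.mul_apply, Equiv.swap_apply_left, perm_apply_inv_self]
  refine ⟨mem_coset.mpr ⟨mem_Hs.mpr fun v => ?_, fun i hi => ?_⟩, hyκ⟩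
  · rw [Equiv.Perm.mul_apply]
    by_cases hvκ : v = κ
    · subst hvκ
      rw [Equiv.swap_apply_left, perm_apply_inv_self]
      exact mem_Hs.mp hzH κ
    · by_cases hvj : v = x⁻¹ (z κ)
      · subst hvj
        rw [Equiv.swap_apply_right]
        have h1 : χ (x κ) = χ κ := mem_Hs.mp hxH κ
        have h2 : χ (x⁻¹ (z κ)) = χ (z κ) := Hs_inv_apply hxH (z κ)
        have h3 : χ (z κ) = χ κ := mem_Hs.mp hzH κ
        rw [h1, h2, h3]
      · rw [Equiv.swap_apply_of_ne_of_ne hvκ hvj]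
        exact mem_Hs.mp hxH v
  · rw [Equiv.Perm.mul_apply]
    have hiκ : i ≠ κ := by
      intro h
      rw [h] at hi
      exact lt_irrefl k hi
    have hij : i ≠ x⁻¹ (z κ) := by
      intro h
      have h1 : x i = z κ := by rw [h, perm_apply_inv_self]
      have h2 : z i = z κ := by rw [hzp i hi, ← hxp i hi, h1]
      have h3 : i = κ := z.injective h2
      exact hiκ h3
    rw [Equiv.swap_apply_of_ne_of_ne hiκ hij]
    exact hxp i hi

lemma phi_phi {κ : Fin n} (x : Equiv.Perm (Fin n)) (b : Fin n) :
    (x * Equiv.swap κ (x⁻¹ b)) * Equiv.swap κ ((x * Equiv.swap κ (x⁻¹ b))⁻¹ (x κ)) = x := by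
  have h1 : (x * Equiv.swap κ (x⁻¹ b))⁻¹ (x κ) = x⁻¹ b := by
    rw [mul_inv_rev, Equiv.Perm.mul_apply, perm_inv_apply_self, Equiv.swap_inv,
      Equiv.swap_apply_left]
  rw [h1, mul_assoc, Equiv.swap_mul_self, mul_one]

lemma fiber_eq_coset {k : ℕ} (hk : k < n) {p z : Equiv.Perm (Fin n)}
    (hz : z ∈ coset χ k p) :
    (coset χ k p).filter (fun g => g ⟨k, hk⟩ = z ⟨k, hk⟩) = coset χ (k + 1) z := by
  obtain ⟨hzH, hzp⟩ := mem_coset.mp hz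
  ext g
  simp only [Finset.mem_filter, mem_coset]
  constructor
  · rintro ⟨⟨hgH, hgp⟩, hgκ⟩
    refine ⟨hgH, fun i hi => ?_⟩
    rcases Nat.lt_succ_iff_lt_or_eq.mp hi with h | h
    · rw [hgp i h, ← hzp i h]
    · have : i = (⟨k, hk⟩ : Fin n) := Fin.ext h
      rw [this, hgκ]
  · rintro ⟨hgH, hgz⟩
    refine ⟨⟨hgH, fun i hi => ?_⟩, hgz ⟨k, hk⟩ (Nat.lt_succ_self k)⟩
    rw [hgz i (hi.trans (Nat.lt_succ_self k)), hzp i hi]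

lemma fiber_sum {k : ℕ} (hk : k < n) {p z₁ z₂ : Equiv.Perm (Fin n)}
    (hz₁ : z₁ ∈ coset χ k p) (hz₂ : z₂ ∈ coset χ k p) (F : Equiv.Perm (Fin n) → ℝ) :
    ∑ y ∈ (coset χ k p).filter (fun g => g ⟨k, hk⟩ = z₂ ⟨k, hk⟩), F y
      = ∑ x ∈ (coset χ k p).filter (fun g => g ⟨k, hk⟩ = z₁ ⟨k, hk⟩),
          F (x * Equiv.swap ⟨k, hk⟩ (x⁻¹ (z₂ ⟨k, hk⟩))) := by
  set κ : Fin n := ⟨k, hk⟩ with hκ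
  apply Finset.sum_nbij' (i := fun y => y * Equiv.swap κ (y⁻¹ (z₁ κ)))
    (j := fun x => x * Equiv.swap κ (x⁻¹ (z₂ κ)))
  · intro y hy
    obtain ⟨hyC, hyκ⟩ := Finset.mem_filter.mp hy
    exact Finset.mem_filter.mpr ⟨(phi_spec hk hyC hz₁).1, (phi_spec hk hyC hz₁).2⟩
  · intro x hx
    obtain ⟨hxC, hxκ⟩ := Finset.mem_filter.mp hx
    exact Finset.mem_filter.mpr ⟨(phi_spec hk hxC hz₂).1, (phi_spec hk hxC hz₂).2⟩
  · intro y hy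
    obtain ⟨hyC, hyκ⟩ := Finset.mem_filter.mp hy
    have := phi_phi (κ := κ) y (z₁ κ)
    rw [hyκ] at this
    exact this
  · intro x hx
    obtain ⟨hxC, hxκ⟩ := Finset.mem_filter.mp hx
    have := phi_phi (κ := κ) x (z₂ κ)
    rw [hxκ] at this
    exact this
  · intro y hy
    obtain ⟨hyC, hyκ⟩ := Finset.mem_filter.mp hy
    have := phi_phi (κ := κ) y (z₁ κ)
    rw [hyκ] at this
    rw [this]


lemma fiber_card {k : ℕ} (hk : k < n) {p z₁ z₂ : Equiv.Perm (Fin n)}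
    (hz₁ : z₁ ∈ coset χ k p) (hz₂ : z₂ ∈ coset χ k p) :
    ((coset χ k p).filter (fun g => g ⟨k, hk⟩ = z₂ ⟨k, hk⟩)).card
      = ((coset χ k p).filter (fun g => g ⟨k, hk⟩ = z₁ ⟨k, hk⟩)).card := by
  have := fiber_sum (χ := χ) hk hz₁ hz₂ (fun _ => (1 : ℝ))
  simp only [Finset.sum_const, nsmul_eq_mul, mul_one] at this
  exact_mod_cast this


lemma mgf_step {k d : ℕ} (hk : k < n) (hk1 : k + 1 = n - d)
    (ih : ∀ p : Equiv.Perm (Fin n), p ∈ Hs χ → ∀ f : Equiv.Perm (Fin n) → ℝ,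
      (∀ g₁ ∈ coset χ (n - d) p, ∀ g₂ ∈ coset χ (n - d) p, |f g₁ - f g₂| ≤ (D g₁ g₂ : ℝ)) →
      ∑ g ∈ coset χ (n - d) p, f g = 0 → ∀ l : ℝ,
        ∑ g ∈ coset χ (n - d) p, Real.exp (l * f g)
          ≤ ((coset χ (n - d) p).card : ℝ) * Real.exp (2 * (d : ℝ) * l ^ 2))
    {p : Equiv.Perm (Fin n)} (hp : p ∈ Hs χ) (f : Equiv.Perm (Fin n) → ℝ)
    (hlip : ∀ g₁ ∈ coset χ k p, ∀ g₂ ∈ coset χ k p, |f g₁ - f g₂| ≤ (D g₁ g₂ : ℝ))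
    (hsum : ∑ g ∈ coset χ k p, f g = 0) (l : ℝ) :
    ∑ g ∈ coset χ k p, Real.exp (l * f g)
      ≤ ((coset χ k p).card : ℝ) * Real.exp (2 * ((d : ℝ) + 1) * l ^ 2) := by
  classical
  have hpC : p ∈ coset χ k p := self_mem_coset hp
  set κ : Fin n := ⟨k, hk⟩ with hκ
  set C := coset χ k p with hCdef
  set Cb : Fin n → Finset (Equiv.Perm (Fin n)) :=
    fun b => C.filter (fun g => g κ = b) with hCbdef
  set V := C.image (fun g => g κ) with hVdef
  set s : ℕ := (Cb (p κ)).card with hsdef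
  set gm : Fin n → ℝ := fun b => (∑ x ∈ Cb b, f x) / ((Cb b).card : ℝ) with hgmdef
  have hs : 0 < s := Finset.card_pos.mpr ⟨p, Finset.mem_filter.mpr ⟨hpC, rfl⟩⟩
  have hsR : (0 : ℝ) < (s : ℝ) := by exact_mod_cast hs
  have hCbC : ∀ b, Cb b ⊆ C := fun b => Finset.filter_subset _ _
  have hcards : ∀ b ∈ V, (Cb b).card = s := by
    intro b hb
    obtain ⟨z, hzC, rfl⟩ := Finset.mem_image.mp hb
    exact fiber_card hk hpC hzC
  -- fiber sums in terms of fiber means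
  have hsumfib : ∀ b ∈ V, ∑ x ∈ Cb b, f x = (s : ℝ) * gm b := by
    intro b hb
    rw [hgmdef]
    simp only
    rw [hcards b hb]
    field_simp
  have hzerofib : ∀ b ∈ V, ∑ x ∈ Cb b, (f x - gm b) = 0 := by
    intro b hb
    rw [Finset.sum_sub_distrib, Finset.sum_const, nsmul_eq_mul, hcards b hb, hsumfib b hb]
    ring
  -- partition of the sum
  have hmaps : ∀ g ∈ C, g κ ∈ V := fun g hg => Finset.mem_image_of_mem _ hg
  have hpart : ∀ F : Equiv.Perm (Fin n) → ℝ,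
      ∑ b ∈ V, ∑ x ∈ Cb b, F x = ∑ g ∈ C, F g := by
    intro F
    exact Finset.sum_fiberwise_of_maps_to hmaps F
  -- mean of fiber means is zero
  have hVmean : ∑ b ∈ V, gm b = 0 := by
    have h0 : ∑ b ∈ V, (s : ℝ) * gm b = 0 := by
      rw [← Finset.sum_congr rfl hsumfib, hpart f, hsum]
    rw [← Finset.mul_sum] at h0
    exact (mul_eq_zero.mp h0).resolve_left (ne_of_gt hsR)
  -- pairwise bound on fiber means
  have hpair : ∀ a ∈ V, ∀ b ∈ V, |gm a - gm b| ≤ 2 := by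
    intro a ha b hb
    obtain ⟨za, hzaC, rfl⟩ := Finset.mem_image.mp ha
    obtain ⟨zb, hzbC, rfl⟩ := Finset.mem_image.mp hb
    have key := fiber_sum (χ := χ) hk hzaC hzbC f
    rw [← hκ, ← hCdef] at key
    have hterm : ∀ x ∈ Cb (za κ), |f x - f (x * Equiv.swap κ (x⁻¹ (zb κ)))| ≤ 2 := by
      intro x hx
      have hxC : x ∈ C := hCbC _ hx
      have hφC : x * Equiv.swap κ (x⁻¹ (zb κ)) ∈ C := by
        have := (phi_spec (χ := χ) hk (by rwa [hCdef] at hxC) hzbC).1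
        rwa [← hκ, ← hCdef] at this
      calc |f x - f (x * Equiv.swap κ (x⁻¹ (zb κ)))|
          ≤ (D x (x * Equiv.swap κ (x⁻¹ (zb κ))) : ℝ) := hlip x hxC _ hφC
        _ ≤ 2 := by exact_mod_cast D_mul_swap_le x κ (x⁻¹ (zb κ))
    have hdiff : gm (za κ) - gm (zb κ)
        = (∑ x ∈ Cb (za κ), (f x - f (x * Equiv.swap κ (x⁻¹ (zb κ))))) / (s : ℝ) := by
      rw [Finset.sum_sub_distrib, hgmdef]
      simp only
      rw [hcards _ ha, hcards _ hb, ← key]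
      ring
    rw [hdiff, abs_div, abs_of_pos hsR, div_le_iff₀ hsR]
    calc |∑ x ∈ Cb (za κ), (f x - f (x * Equiv.swap κ (x⁻¹ (zb κ))))|
        ≤ ∑ x ∈ Cb (za κ), |f x - f (x * Equiv.swap κ (x⁻¹ (zb κ)))| :=
          Finset.abs_sum_le_sum_abs _ _
      _ ≤ ∑ _x ∈ Cb (za κ), (2 : ℝ) := Finset.sum_le_sum hterm
      _ = 2 * (s : ℝ) := by
          rw [Finset.sum_const, nsmul_eq_mul, hcards _ ha]; ring
  -- each fiber mean is bounded by 2
  have hVne : (0 : ℝ) < (V.card : ℝ) := by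
    have : p κ ∈ V := hmaps p hpC
    exact_mod_cast Finset.card_pos.mpr ⟨p κ, this⟩
  have hbound : ∀ b ∈ V, |gm b| ≤ 2 := by
    intro b hb
    have h1 : ∑ a ∈ V, (gm b - gm a) = (V.card : ℝ) * gm b := by
      rw [Finset.sum_sub_distrib, Finset.sum_const, hVmean, nsmul_eq_mul]; ring
    have h2 : |(V.card : ℝ) * gm b| ≤ 2 * (V.card : ℝ) := by
      rw [← h1]
      calc |∑ a ∈ V, (gm b - gm a)| ≤ ∑ a ∈ V, |gm b - gm a| :=
            Finset.abs_sum_le_sum_abs _ _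
        _ ≤ ∑ _a ∈ V, (2 : ℝ) := Finset.sum_le_sum (fun a ha => hpair b hb a ha)
        _ = 2 * (V.card : ℝ) := by rw [Finset.sum_const, nsmul_eq_mul]; ring
    rw [abs_mul, abs_of_pos hVne] at h2
    exact le_of_mul_le_mul_left (by linarith) hVne
  -- apply the induction hypothesis on each fiber
  have hIH : ∀ b ∈ V, ∑ x ∈ Cb b, Real.exp (l * (f x - gm b))
      ≤ (s : ℝ) * Real.exp (2 * (d : ℝ) * l ^ 2) := by
    intro b hb
    obtain ⟨z, hzC, rfl⟩ := Finset.mem_image.mp hb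
    have hzH : z ∈ Hs χ := (mem_coset.mp (by rwa [hCdef] at hzC)).1
    have hfib : Cb (z κ) = coset χ (n - d) z := by
      rw [hCbdef]
      simp only
      rw [hCdef, hκ, ← hk1]
      exact fiber_eq_coset hk (by rwa [hCdef] at hzC)
    have hlip' : ∀ g₁ ∈ coset χ (n - d) z, ∀ g₂ ∈ coset χ (n - d) z,
        |(f g₁ - gm (z κ)) - (f g₂ - gm (z κ))| ≤ (D g₁ g₂ : ℝ) := by
      intro g₁ hg₁ g₂ hg₂
      rw [← hfib] at hg₁ hg₂
      have := hlip g₁ (hCbC _ hg₁) g₂ (hCbC _ hg₂)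
      simpa using this
    have hsum' : ∑ g ∈ coset χ (n - d) z, (f g - gm (z κ)) = 0 := by
      rw [← hfib]; exact hzerofib _ hb
    have := ih z hzH (fun x => f x - gm (z κ)) hlip' hsum' l
    rw [← hfib, hcards _ hb] at this
    exact this
  -- total cardinality
  have hcardC : C.card = V.card * s := by
    rw [Finset.card_eq_sum_card_fiberwise hmaps]
    rw [Finset.sum_congr rfl hcards, Finset.sum_const, smul_eq_mul]
  -- put everything together
  have hexp : ∀ b ∈ V, ∑ x ∈ Cb b, Real.exp (l * f x)
      = Real.exp (l * gm b) * ∑ x ∈ Cb b, Real.exp (l * (f x - gm b)) := by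
    intro b hb
    rw [Finset.mul_sum]
    apply Finset.sum_congr rfl
    intro x hx
    rw [← Real.exp_add]
    ring_nf
  calc ∑ g ∈ C, Real.exp (l * f g)
      = ∑ b ∈ V, ∑ x ∈ Cb b, Real.exp (l * f x) := (hpart _).symm
    _ = ∑ b ∈ V, Real.exp (l * gm b) * ∑ x ∈ Cb b, Real.exp (l * (f x - gm b)) :=
        Finset.sum_congr rfl hexp
    _ ≤ ∑ b ∈ V, Real.exp (l * gm b) * ((s : ℝ) * Real.exp (2 * (d : ℝ) * l ^ 2)) := by
        apply Finset.sum_le_sum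
        intro b hb
        exact mul_le_mul_of_nonneg_left (hIH b hb) (Real.exp_pos _).le
    _ = ((s : ℝ) * Real.exp (2 * (d : ℝ) * l ^ 2)) * ∑ b ∈ V, Real.exp (l * gm b) := by
        rw [← Finset.sum_mul]; ring
    _ ≤ ((s : ℝ) * Real.exp (2 * (d : ℝ) * l ^ 2))
          * ((V.card : ℝ) * Real.exp (2 * l ^ 2)) := by
        apply mul_le_mul_of_nonneg_left
          (sum_exp_le_of_mean_zero V gm hbound hVmean l)
        positivity
    _ = (C.card : ℝ) * Real.exp (2 * ((d : ℝ) + 1) * l ^ 2) := by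
        rw [hcardC]
        push_cast
        rw [show (2 * ((d : ℝ) + 1) * l ^ 2 : ℝ) = 2 * (d : ℝ) * l ^ 2 + 2 * l ^ 2 by ring,
          Real.exp_add]
        ring


lemma mgf (d : ℕ) : ∀ p ∈ Hs χ, ∀ f : Equiv.Perm (Fin n) → ℝ,
    (∀ g₁ ∈ coset χ (n - d) p, ∀ g₂ ∈ coset χ (n - d) p, |f g₁ - f g₂| ≤ (D g₁ g₂ : ℝ)) →
    ∑ g ∈ coset χ (n - d) p, f g = 0 → ∀ l : ℝ,
      ∑ g ∈ coset χ (n - d) p, Real.exp (l * f g)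
        ≤ ((coset χ (n - d) p).card : ℝ) * Real.exp (2 * (d : ℝ) * l ^ 2) := by
  induction d with
  | zero =>
    intro p hp f hlip hsum l
    rw [Nat.sub_zero] at *
    rw [coset_of_le le_rfl hp] at hsum ⊢
    rw [Finset.sum_singleton] at hsum
    rw [Finset.sum_singleton, hsum, Finset.card_singleton]
    simp
  | succ d ih =>
    intro p hp f hlip hsum l
    by_cases hdn : n ≤ d
    · have heq : n - (d + 1) = n - d := by omega
      rw [heq] at hlip hsum ⊢
      calc ∑ g ∈ coset χ (n - d) p, Real.exp (l * f g)
          ≤ ((coset χ (n - d) p).card : ℝ) * Real.exp (2 * (d : ℝ) * l ^ 2) :=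
            ih p hp f hlip hsum l
        _ ≤ ((coset χ (n - d) p).card : ℝ) * Real.exp (2 * ((d : ℝ) + 1) * l ^ 2) := by
            apply mul_le_mul_of_nonneg_left _ (Nat.cast_nonneg _)
            apply Real.exp_le_exp.mpr
            nlinarith [sq_nonneg l]
        _ = ((coset χ (n - d) p).card : ℝ) * Real.exp (2 * ((d + 1 : ℕ) : ℝ) * l ^ 2) := by
            push_cast; ring_nf
    · push_neg at hdn
      have hk : n - (d + 1) < n := by omega
      have hk1 : (n - (d + 1)) + 1 = n - d := by omega
      have := mgf_step (χ := χ) hk hk1 ih hp f hlip hsum l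
      push_cast at this ⊢
      exact this

/-- One-sided Chernoff bound over `Hs χ`. -/
lemma chernoff (f : Equiv.Perm (Fin n) → ℝ)
    (hlip : ∀ g₁ ∈ Hs χ, ∀ g₂ ∈ Hs χ, |f g₁ - f g₂| ≤ (D g₁ g₂ : ℝ))
    (hsum : ∑ g ∈ Hs χ, f g = 0) {t l : ℝ} (hl : 0 ≤ l) :
    (((Hs χ).filter fun g => t < f g).card : ℝ)
      ≤ ((Hs χ).card : ℝ) * Real.exp (2 * n * l ^ 2 - l * t) := by
  have hmgf : ∑ g ∈ Hs χ, Real.exp (l * f g)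
      ≤ ((Hs χ).card : ℝ) * Real.exp (2 * (n : ℝ) * l ^ 2) := by
    have := mgf (χ := χ) n 1 one_mem_Hs f
    rw [Nat.sub_self, coset_zero] at this
    exact this hlip hsum l
  have hcount : (((Hs χ).filter fun g => t < f g).card : ℝ) * Real.exp (l * t)
      ≤ ∑ g ∈ Hs χ, Real.exp (l * f g) := by
    calc (((Hs χ).filter fun g => t < f g).card : ℝ) * Real.exp (l * t)
        = ∑ _g ∈ (Hs χ).filter fun g => t < f g, Real.exp (l * t) := by
          rw [Finset.sum_const, nsmul_eq_mul]
      _ ≤ ∑ g ∈ (Hs χ).filter fun g => t < f g, Real.exp (l * f g) := by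
          apply Finset.sum_le_sum
          intro g hg
          have ht := (Finset.mem_filter.mp hg).2
          exact Real.exp_le_exp.mpr (mul_le_mul_of_nonneg_left ht.le hl)
      _ ≤ ∑ g ∈ Hs χ, Real.exp (l * f g) := by
          apply Finset.sum_le_sum_of_subset_of_nonneg (Finset.filter_subset _ _)
          intro g _ _
          exact (Real.exp_pos _).le
  have h1 : (((Hs χ).filter fun g => t < f g).card : ℝ)
      ≤ ((Hs χ).card : ℝ) * Real.exp (2 * (n : ℝ) * l ^ 2) / Real.exp (l * t) := by
    rw [le_div_iff₀ (Real.exp_pos _)]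
    exact hcount.trans hmgf
  calc (((Hs χ).filter fun g => t < f g).card : ℝ)
      ≤ ((Hs χ).card : ℝ) * Real.exp (2 * (n : ℝ) * l ^ 2) / Real.exp (l * t) := h1
    _ = ((Hs χ).card : ℝ) * Real.exp (2 * n * l ^ 2 - l * t) := by
        rw [Real.exp_sub]; ring


lemma card_Hs_pos : 0 < ((Hs χ).card : ℝ) := by
  exact_mod_cast Finset.card_pos.mpr ⟨1, one_mem_Hs⟩

lemma dev_le {f : Equiv.Perm (Fin n) → ℝ} {c : ℝ}
    (h : ∀ g₁ ∈ Hs χ, ∀ g₂ ∈ Hs χ, |f g₁ - f g₂| ≤ c) {g : Equiv.Perm (Fin n)}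
    (hg : g ∈ Hs χ) :
    |f g - (∑ g' ∈ Hs χ, f g') / ((Hs χ).card : ℝ)| ≤ c := by
  have hN : (0 : ℝ) < ((Hs χ).card : ℝ) := card_Hs_pos
  have key : f g - (∑ g' ∈ Hs χ, f g') / ((Hs χ).card : ℝ)
      = (∑ g' ∈ Hs χ, (f g - f g')) / ((Hs χ).card : ℝ) := by
    rw [Finset.sum_sub_distrib, Finset.sum_const, nsmul_eq_mul]
    field_simp
  rw [key, abs_div, abs_of_pos hN, div_le_iff₀ hN]
  calc |∑ g' ∈ Hs χ, (f g - f g')| ≤ ∑ g' ∈ Hs χ, |f g - f g'| :=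
        Finset.abs_sum_le_sum_abs _ _
    _ ≤ ∑ _g' ∈ Hs χ, c := Finset.sum_le_sum (fun g' hg' => h g hg g' hg')
    _ = c * ((Hs χ).card : ℝ) := by rw [Finset.sum_const, nsmul_eq_mul]; ring

lemma ncard_eq_D (g₁ g₂ : Equiv.Perm (Fin n)) :
    ({i : Fin n | g₁ i ≠ g₂ i}.ncard : ℝ) = (D g₁ g₂ : ℝ) := by
  have h : {i : Fin n | g₁ i ≠ g₂ i}
      = ↑(Finset.univ.filter fun i => g₁ i ≠ g₂ i) := by
    ext i; simp
  rw [h, Set.ncard_coe_finset, D]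

lemma main_bound (f : Equiv.Perm (Fin n) → ℝ)
    (hf : ∀ g₁ ∈ Hs χ, ∀ g₂ ∈ Hs χ,
      |f g₁ - f g₂| ≤ ({i : Fin n | g₁ i ≠ g₂ i}.ncard : ℝ) / n)
    {ε : ℝ} (hε : 0 < ε) :
    ((((Hs χ).filter fun g =>
          ε < |f g - (∑ g' ∈ Hs χ, f g') / ((Hs χ).card : ℝ)|).card : ℝ)
        / ((Hs χ).card : ℝ))
      < 4 * Real.exp (-((n : ℝ) / 16) * ε ^ 2) := by
  classical
  have hN : (0 : ℝ) < ((Hs χ).card : ℝ) := card_Hs_pos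
  set M : ℝ := (∑ g' ∈ Hs χ, f g') / ((Hs χ).card : ℝ) with hM
  by_cases hn : n = 0
  · -- degenerate case: the distance is identically 0, so f is constant on Hs χ
    subst hn
    have hzero : ∀ g₁ ∈ Hs χ, ∀ g₂ ∈ Hs χ, |f g₁ - f g₂| ≤ (0 : ℝ) := by
      intro g₁ h₁ g₂ h₂
      have := hf g₁ h₁ g₂ h₂
      simpa using this
    have hempty : ((Hs χ).filter fun g => ε < |f g - M|) = ∅ := by
      apply Finset.filter_false_of_mem
      intro g hg
      have := dev_le hzero hg
      rw [← hM] at this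
      push_neg
      linarith
    rw [hempty]
    simp only [Finset.card_empty, Nat.cast_zero, zero_div]
    positivity
  · have hnpos : (0 : ℝ) < n := by exact_mod_cast Nat.pos_of_ne_zero hn
    set F : Equiv.Perm (Fin n) → ℝ := fun g => (n : ℝ) * (f g - M) with hF
    have hFlip : ∀ g₁ ∈ Hs χ, ∀ g₂ ∈ Hs χ, |F g₁ - F g₂| ≤ (D g₁ g₂ : ℝ) := by
      intro g₁ h₁ g₂ h₂
      have h := hf g₁ h₁ g₂ h₂
      rw [ncard_eq_D] at h
      have e : F g₁ - F g₂ = (n : ℝ) * (f g₁ - f g₂) := by rw [hF]; ring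
      rw [e, abs_mul, abs_of_pos hnpos]
      calc (n : ℝ) * |f g₁ - f g₂| ≤ (n : ℝ) * ((D g₁ g₂ : ℝ) / n) :=
            mul_le_mul_of_nonneg_left h hnpos.le
        _ = (D g₁ g₂ : ℝ) := by field_simp
    have h1 : ∑ g ∈ Hs χ, (f g - M) = 0 := by
      rw [Finset.sum_sub_distrib, Finset.sum_const, nsmul_eq_mul, hM]
      field_simp
      ring
    have hFsum : ∑ g ∈ Hs χ, F g = 0 := by
      rw [hF, ← Finset.mul_sum, h1, mul_zero]
    have hnFlip : ∀ g₁ ∈ Hs χ, ∀ g₂ ∈ Hs χ, |(-F) g₁ - (-F) g₂| ≤ (D g₁ g₂ : ℝ) := by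
      intro g₁ h₁ g₂ h₂
      have e : (-F) g₁ - (-F) g₂ = F g₂ - F g₁ := by simp; ring
      rw [e, abs_sub_comm]
      exact hFlip g₁ h₁ g₂ h₂
    have hnFsum : ∑ g ∈ Hs χ, (-F) g = 0 := by
      simp only [Pi.neg_apply]
      rw [Finset.sum_neg_distrib, hFsum, neg_zero]
    have hl : (0 : ℝ) ≤ ε / 4 := by linarith
    have hP := chernoff (χ := χ) F hFlip hFsum (t := (n : ℝ) * ε) (l := ε / 4) hl
    have hQ := chernoff (χ := χ) (-F) hnFlip hnFsum (t := (n : ℝ) * ε) (l := ε / 4) hl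
    have hexp : 2 * (n : ℝ) * (ε / 4) ^ 2 - ε / 4 * ((n : ℝ) * ε)
        = -((n : ℝ) * ε ^ 2 / 8) := by ring
    rw [hexp] at hP hQ
    -- the deviation set is contained in the union of the two tail sets
    have hsub : ((Hs χ).filter fun g => ε < |f g - M|)
        ⊆ ((Hs χ).filter fun g => (n : ℝ) * ε < F g)
          ∪ ((Hs χ).filter fun g => (n : ℝ) * ε < (-F) g) := by
      intro g hg
      obtain ⟨hgH, hgε⟩ := Finset.mem_filter.mp hg
      have habs : (n : ℝ) * ε < |F g| := by
        rw [hF]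
        simp only
        rw [abs_mul, abs_of_pos hnpos]
        exact mul_lt_mul_of_pos_left hgε hnpos
      rcases lt_abs.mp habs with h | h
      · exact Finset.mem_union_left _ (Finset.mem_filter.mpr ⟨hgH, h⟩)
      · exact Finset.mem_union_right _ (Finset.mem_filter.mpr ⟨hgH, by simpa using h⟩)
    have hcard : ((((Hs χ).filter fun g => ε < |f g - M|).card : ℝ))
        ≤ (((Hs χ).filter fun g => (n : ℝ) * ε < F g).card : ℝ)
          + (((Hs χ).filter fun g => (n : ℝ) * ε < (-F) g).card : ℝ) := by
      have := (Finset.card_le_card hsub).trans (Finset.card_union_le _ _)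
      exact_mod_cast this
    have hE : Real.exp (-((n : ℝ) * ε ^ 2 / 8))
        ≤ Real.exp (-((n : ℝ) / 16) * ε ^ 2) := by
      apply Real.exp_le_exp.mpr
      nlinarith [sq_nonneg ε, hnpos]
    rw [div_lt_iff₀ hN]
    calc ((((Hs χ).filter fun g => ε < |f g - M|).card : ℝ))
        ≤ (((Hs χ).filter fun g => (n : ℝ) * ε < F g).card : ℝ)
          + (((Hs χ).filter fun g => (n : ℝ) * ε < (-F) g).card : ℝ) := hcard
      _ ≤ ((Hs χ).card : ℝ) * Real.exp (-((n : ℝ) * ε ^ 2 / 8))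
          + ((Hs χ).card : ℝ) * Real.exp (-((n : ℝ) * ε ^ 2 / 8)) := add_le_add hP hQ
      _ = 2 * Real.exp (-((n : ℝ) * ε ^ 2 / 8)) * ((Hs χ).card : ℝ) := by ring
      _ ≤ 2 * Real.exp (-((n : ℝ) / 16) * ε ^ 2) * ((Hs χ).card : ℝ) := by
          apply mul_le_mul_of_nonneg_right _ hN.le
          linarith [hE]
      _ < 4 * Real.exp (-((n : ℝ) / 16) * ε ^ 2) * ((Hs χ).card : ℝ) := by
          have h4 : (0 : ℝ) < Real.exp (-((n : ℝ) / 16) * ε ^ 2) := Real.exp_pos _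
          nlinarith

end Stmt17

/-- The stabilizer `H_χ` of an equitable 2-coloring `χ` of `[n]` (`n` even) inside
`Sym(n)`, with the uniform measure and the normalized Hamming metric, is
`(4, n/16)`-concentrated. -/
theorem stmt17 (n : ℕ) (hn : Even n) (χ : Fin n → Fin 2)
    (h0 : (Finset.univ.filter fun v => χ v = 0).card = n / 2)
    (h1 : (Finset.univ.filter fun v => χ v = 1).card = n / 2) :
    let H : Finset (Equiv.Perm (Fin n)) :=
      Finset.univ.filter fun g => ∀ v, χ (g v) = χ v
    let dH : Equiv.Perm (Fin n) → Equiv.Perm (Fin n) → ℝ :=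
      fun g₁ g₂ => ({i : Fin n | g₁ i ≠ g₂ i}.ncard : ℝ) / n
    ∀ f : Equiv.Perm (Fin n) → ℝ,
      (∀ g₁ ∈ H, ∀ g₂ ∈ H, |f g₁ - f g₂| ≤ dH g₁ g₂) →
      ∀ ε > 0,
        ({g ∈ (H : Set (Equiv.Perm (Fin n))) |
              ε < |f g - (∑ g' ∈ H, f g') / (H.card : ℝ)|}.ncard : ℝ) / H.card
          < 4 * Real.exp (-((n : ℝ) / 16) * ε ^ 2) := by
  intro H dH f hf ε hε
  have hH : H = Stmt17.Hs χ := rfl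
  have key := Stmt17.main_bound (χ := χ) f (fun g₁ h₁ g₂ h₂ => hf g₁ h₁ g₂ h₂) hε
  have hset : {g ∈ (H : Set (Equiv.Perm (Fin n))) |
        ε < |f g - (∑ g' ∈ H, f g') / (H.card : ℝ)|}.ncard
      = (H.filter fun g =>
          ε < |f g - (∑ g' ∈ H, f g') / (H.card : ℝ)|).card := by
    have hseteq : {g ∈ (H : Set (Equiv.Perm (Fin n))) |
          ε < |f g - (∑ g' ∈ H, f g') / (H.card : ℝ)|}
        = ↑(H.filter fun g =>
            ε < |f g - (∑ g' ∈ H, f g') / (H.card : ℝ)|) := by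
      ext g
      simp
    rw [hseteq, Set.ncard_coe_finset]
  rw [hset]
  exact key
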